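/- arXiv:0903.2741 — 3 statements merged into one kernel-verified Lean document; each statement's English description precedes it below -/
import Mathlib

section
/- Let K be a real number field of degree d+1 with ring of integers O, basis α_0 = 1, α_1, ..., α_d of K over Q, and dual basis β_0, ..., β_d for the trace form. Let γ ∈ K be nonzero, let η ∈ O be a unit with −1 < η < 1 and N = |η|^{−1}, satisfying |σ_j(η)| ≍ N^{1/d} for 1 ≤ j ≤ d. Write γη = a_0 + a_1 α_1 + ... + a_d α_d with a_k ∈ Q. Then max_{0 ≤ k ≤ d} |a_k| ≍ N^{1/d}, with implicit constants depending only on K, the basis, and γ. -/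
open NumberField

/-- `K` a real number field of degree `d+1`, with a `ℚ`-basis
`α_0 = 1, α_1, …, α_d`, embeddings `σ_0 = Id, σ_1, …, σ_d` with `σ_0` real, and
`γ ∈ K` nonzero.  If `η` is a unit of `𝓞 K` with `-1 < σ_0(η) < 1`,
`N = |σ_0(η)|⁻¹`, satisfying `|σ_j(η)| ≍ N^{1/d}` for `1 ≤ j ≤ d`, and if
`γη = a_0 + a_1 α_1 + ⋯ + a_d α_d` with `a_k ∈ ℚ`, then
`max_k |a_k| ≍ N^{1/d}`, with constants independent of `η`. -/
theorem stmt4 {K : Type*} [Field K] [NumberField K]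
    (d : ℕ) (hd : 1 ≤ d) (hdim : Module.finrank ℚ K = d + 1)
    (σ : Fin (d + 1) → (K →+* ℂ)) (hσ : Function.Injective σ)
    (hreal : ∀ x : K, (σ 0 x).im = 0)
    (b : Module.Basis (Fin (d + 1)) ℚ K) (hb0 : b 0 = 1)
    (γ : K) (hγ : γ ≠ 0) :
    ∀ A B : ℝ, 0 < A → 0 < B → ∃ c₁ c₂ : ℝ, 0 < c₁ ∧ 0 < c₂ ∧
      ∀ η : (RingOfIntegers K)ˣ,
        ‖σ 0 ((η : RingOfIntegers K) : K)‖ < 1 →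
        (∀ j : Fin (d + 1), 1 ≤ (j : ℕ) →
          A * ((‖σ 0 ((η : RingOfIntegers K) : K)‖)⁻¹) ^ ((1 : ℝ) / d)
            ≤ ‖σ j ((η : RingOfIntegers K) : K)‖ ∧
          ‖σ j ((η : RingOfIntegers K) : K)‖
            ≤ B * ((‖σ 0 ((η : RingOfIntegers K) : K)‖)⁻¹) ^ ((1 : ℝ) / d)) →
        c₁ * ((‖σ 0 ((η : RingOfIntegers K) : K)‖)⁻¹) ^ ((1 : ℝ) / d)
            ≤ (Finset.univ.sup' Finset.univ_nonempty
                fun k : Fin (d + 1) =>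
                  |(b.repr (γ * ((η : RingOfIntegers K) : K)) k : ℝ)|) ∧
          (Finset.univ.sup' Finset.univ_nonempty
                fun k : Fin (d + 1) =>
                  |(b.repr (γ * ((η : RingOfIntegers K) : K)) k : ℝ)|)
            ≤ c₂ * ((‖σ 0 ((η : RingOfIntegers K) : K)‖)⁻¹) ^ ((1 : ℝ) / d) := by
  classical
  intro A B hA hB
  have hexp : (0:ℝ) ≤ 1 / d := by positivity
  -- σ is a bijection onto all embeddings
  have hcard : Fintype.card (Fin (d+1)) = Fintype.card (K →+* ℂ) := by
    rw [Fintype.card_fin, NumberField.Embeddings.card K ℂ, hdim]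
  have hbij : Function.Bijective σ :=
    (Fintype.bijective_iff_injective_and_card σ).mpr ⟨hσ, hcard⟩
  -- dual basis for the trace form
  have hnd := traceForm_nondegenerate ℚ K
  set β := (Algebra.traceForm ℚ K).dualBasis hnd b with hβ
  -- the coefficient recovery formula
  have hrepr : ∀ (x : K) (k : Fin (d+1)), ((b.repr x k : ℚ) : ℂ) = ∑ j, σ j (x * β k) := by
    intro x k
    have h1 : Algebra.trace ℚ K (x * β k) = b.repr x k := by
      conv_lhs => rw [← b.sum_repr x]
      rw [Finset.sum_mul, map_sum]
      have h2 : ∀ i : Fin (d+1), Algebra.trace ℚ K (b.repr x i • b i * β k)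
          = b.repr x i * (if i = k then 1 else 0) := by
        intro i
        rw [smul_mul_assoc, map_smul, smul_eq_mul]
        congr 1
        have := (Algebra.traceForm ℚ K).apply_dualBasis_right hnd
          (Algebra.traceForm_isSymm ℚ) b i k
        rwa [Algebra.traceForm_apply] at this
      simp only [h2, mul_ite, mul_one, mul_zero]
      simp
    have h2 : (algebraMap ℚ ℂ) (Algebra.trace ℚ K (x * β k))
        = ∑ φ : K →ₐ[ℚ] ℂ, φ (x * β k) := trace_eq_sum_embeddings ℂ
    rw [h1] at h2
    have h3 : ∑ φ : K →ₐ[ℚ] ℂ, φ (x * β k) = ∑ ψ : K →+* ℂ, ψ (x * β k) :=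
      (Fintype.sum_equiv (RingHom.equivRatAlgHom K ℂ) (fun ψ => ((RingHom.equivRatAlgHom K ℂ) ψ) (x * β k))
        (fun ψ => ψ (x * β k)) (fun ψ => rfl)).symm
    have h4 : ∑ ψ : K →+* ℂ, ψ (x * β k) = ∑ j, σ j (x * β k) :=
      (Fintype.sum_bijective σ hbij _ _ (fun j => rfl)).symm
    calc ((b.repr x k : ℚ) : ℂ) = algebraMap ℚ ℂ (b.repr x k) := (eq_ratCast _ _).symm
      _ = ∑ j, σ j (x * β k) := h2.trans (h3.trans h4)
  -- constants for the norm comparison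
  set C1 : ℝ := (∑ k : Fin (d+1), ∑ j : Fin (d+1), ‖σ j (b k)‖) + 1 with hC1
  have hC1pos : 0 < C1 := by
    have : (0:ℝ) ≤ ∑ k : Fin (d+1), ∑ j : Fin (d+1), ‖σ j (b k)‖ :=
      Finset.sum_nonneg fun _ _ => Finset.sum_nonneg fun _ _ => norm_nonneg _
    linarith
  set C2 : ℝ := (∑ k : Fin (d+1), ∑ j : Fin (d+1), ‖σ j (β k)‖) + 1 with hC2
  have hC2pos : 0 < C2 := by
    have : (0:ℝ) ≤ ∑ k : Fin (d+1), ∑ j : Fin (d+1), ‖σ j (β k)‖ :=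
      Finset.sum_nonneg fun _ _ => Finset.sum_nonneg fun _ _ => norm_nonneg _
    linarith
  -- pointwise comparison: embeddings bounded by coefficients
  have hMS : ∀ (x : K) (j : Fin (d+1)), ‖σ j x‖
      ≤ C1 * (Finset.univ.sup' Finset.univ_nonempty
          fun k : Fin (d + 1) => |(b.repr x k : ℝ)|) := by
    intro x j
    have hSnn : (0:ℝ) ≤ Finset.univ.sup' Finset.univ_nonempty
        (fun k : Fin (d + 1) => |(b.repr x k : ℝ)|) :=
      le_trans (abs_nonneg _)
        (Finset.le_sup' (fun k : Fin (d + 1) => |(b.repr x k : ℝ)|)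
          (Finset.mem_univ (0 : Fin (d+1))))
    have hx : σ j x = ∑ k, (b.repr x k : ℂ) * σ j (b k) := by
      conv_lhs => rw [← b.sum_repr x]
      rw [map_sum]
      refine Finset.sum_congr rfl fun k _ => ?_
      rw [Rat.smul_def, map_mul, map_ratCast]
    calc ‖σ j x‖ ≤ ∑ k, ‖(b.repr x k : ℂ) * σ j (b k)‖ := by
          rw [hx]; exact norm_sum_le _ _
      _ = ∑ k, |(b.repr x k : ℝ)| * ‖σ j (b k)‖ := by
          refine Finset.sum_congr rfl fun k _ => ?_
          rw [norm_mul, ← Complex.ofReal_ratCast, Complex.norm_real, Real.norm_eq_abs]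
      _ ≤ ∑ k, (Finset.univ.sup' Finset.univ_nonempty
              fun k : Fin (d + 1) => |(b.repr x k : ℝ)|) * ‖σ j (b k)‖ := by
          refine Finset.sum_le_sum fun k _ => ?_
          exact mul_le_mul_of_nonneg_right
            (Finset.le_sup' (fun k : Fin (d+1) => |(b.repr x k : ℝ)|) (Finset.mem_univ k))
            (norm_nonneg _)
      _ = (∑ k, ‖σ j (b k)‖) * (Finset.univ.sup' Finset.univ_nonempty
              fun k : Fin (d + 1) => |(b.repr x k : ℝ)|) := by
          rw [← Finset.mul_sum, mul_comm]
      _ ≤ C1 * (Finset.univ.sup' Finset.univ_nonempty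
              fun k : Fin (d + 1) => |(b.repr x k : ℝ)|) := by
          refine mul_le_mul_of_nonneg_right ?_ hSnn
          rw [hC1]
          have h1 : ∑ k : Fin (d+1), ‖σ j (b k)‖
              ≤ ∑ k : Fin (d+1), ∑ j' : Fin (d+1), ‖σ j' (b k)‖ := by
            refine Finset.sum_le_sum fun k _ => ?_
            exact Finset.single_le_sum (f := fun j' => ‖σ j' (b k)‖)
              (fun _ _ => norm_nonneg _) (Finset.mem_univ j)
          linarith
  -- pointwise comparison: coefficients bounded by embeddings
  have hSM : ∀ (x : K) (k : Fin (d+1)), |(b.repr x k : ℝ)|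
      ≤ C2 * (Finset.univ.sup' Finset.univ_nonempty
          fun j : Fin (d + 1) => ‖σ j x‖) := by
    intro x k
    have hMnn : (0:ℝ) ≤ Finset.univ.sup' Finset.univ_nonempty
        (fun j : Fin (d + 1) => ‖σ j x‖) :=
      le_trans (norm_nonneg _)
        (Finset.le_sup' (fun j : Fin (d + 1) => ‖σ j x‖)
          (Finset.mem_univ (0 : Fin (d+1))))
    have h0 : |(b.repr x k : ℝ)| = ‖((b.repr x k : ℚ) : ℂ)‖ := by
      rw [← Complex.ofReal_ratCast, Complex.norm_real, Real.norm_eq_abs]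
    calc |(b.repr x k : ℝ)| = ‖∑ j, σ j (x * β k)‖ := by rw [h0, hrepr]
      _ ≤ ∑ j, ‖σ j (x * β k)‖ := norm_sum_le _ _
      _ = ∑ j, ‖σ j x‖ * ‖σ j (β k)‖ := by
          refine Finset.sum_congr rfl fun j _ => by rw [map_mul, norm_mul]
      _ ≤ ∑ j, (Finset.univ.sup' Finset.univ_nonempty
              fun j : Fin (d + 1) => ‖σ j x‖) * ‖σ j (β k)‖ := by
          refine Finset.sum_le_sum fun j _ => ?_
          exact mul_le_mul_of_nonneg_right
            (Finset.le_sup' (fun j : Fin (d+1) => ‖σ j x‖) (Finset.mem_univ j))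
            (norm_nonneg _)
      _ = (∑ j, ‖σ j (β k)‖) * (Finset.univ.sup' Finset.univ_nonempty
              fun j : Fin (d + 1) => ‖σ j x‖) := by
          rw [← Finset.mul_sum, mul_comm]
      _ ≤ C2 * (Finset.univ.sup' Finset.univ_nonempty
              fun j : Fin (d + 1) => ‖σ j x‖) := by
          refine mul_le_mul_of_nonneg_right ?_ hMnn
          rw [hC2]
          have h1 : ∑ j : Fin (d+1), ‖σ j (β k)‖
              ≤ ∑ k' : Fin (d+1), ∑ j : Fin (d+1), ‖σ j (β k')‖ :=
            Finset.single_le_sum (f := fun k' => ∑ j : Fin (d+1), ‖σ j (β k')‖)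
              (fun _ _ => Finset.sum_nonneg fun _ _ => norm_nonneg _) (Finset.mem_univ k)
          linarith
  -- constants involving γ
  set j₁ : Fin (d+1) := ⟨1, by omega⟩ with hj₁
  have hj₁ge : 1 ≤ (j₁ : ℕ) := le_refl 1
  have hg : 0 < ‖σ j₁ γ‖ := by
    rw [norm_pos_iff]
    exact (map_ne_zero (σ j₁)).mpr hγ
  set g : ℝ := ‖σ j₁ γ‖ with hgdef
  set G : ℝ := (Finset.univ.sup' Finset.univ_nonempty
      fun j : Fin (d + 1) => ‖σ j γ‖) + 1 with hG
  have hGpos : 0 < G := by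
    have : g ≤ Finset.univ.sup' Finset.univ_nonempty
        (fun j : Fin (d + 1) => ‖σ j γ‖) :=
      Finset.le_sup' (fun j : Fin (d+1) => ‖σ j γ‖) (Finset.mem_univ j₁)
    rw [hG]; linarith
  have hγle : ∀ j : Fin (d+1), ‖σ j γ‖ ≤ G := by
    intro j
    have : ‖σ j γ‖ ≤ Finset.univ.sup' Finset.univ_nonempty
        (fun j : Fin (d + 1) => ‖σ j γ‖) :=
      Finset.le_sup' (fun j : Fin (d+1) => ‖σ j γ‖) (Finset.mem_univ j)
    rw [hG]; linarith
  set D : ℝ := max 1 B with hD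
  have hDpos : (0:ℝ) < D := lt_of_lt_of_le one_pos (le_max_left _ _)
  refine ⟨g * A / C1, C2 * (G * D), div_pos (mul_pos hg hA) hC1pos,
    mul_pos hC2pos (mul_pos hGpos hDpos), ?_⟩
  intro η hη1 hηj
  set u : K := ((η : RingOfIntegers K) : K) with hu
  have hune : u ≠ 0 := by
    have h1 : (η : RingOfIntegers K) ≠ 0 := Units.ne_zero η
    exact RingOfIntegers.coe_ne_zero_iff.mpr h1
  have ht0 : 0 < ‖σ 0 u‖ := by
    rw [norm_pos_iff]
    exact (map_ne_zero (σ 0)).mpr hune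
  set P : ℝ := ((‖σ 0 u‖)⁻¹) ^ ((1:ℝ)/d) with hP
  have hPpos : 0 < P := Real.rpow_pos_of_pos (inv_pos.mpr ht0) _
  have hP1 : 1 ≤ P :=
    Real.one_le_rpow (by rw [le_inv_comm₀ one_pos ht0]; simpa using hη1.le) hexp
  -- upper bound for embeddings of γ * u
  have hMu : ∀ j : Fin (d+1), ‖σ j (γ * u)‖ ≤ G * D * P := by
    intro j
    have huj : ‖σ j u‖ ≤ D * P := by
      rcases Nat.eq_zero_or_pos (j : ℕ) with h | h
      · have hj0 : j = 0 := Fin.ext h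
        rw [hj0]
        calc ‖σ 0 u‖ ≤ 1 := hη1.le
          _ ≤ P := hP1
          _ ≤ D * P := le_mul_of_one_le_left hPpos.le (le_max_left _ _)
      · calc ‖σ j u‖ ≤ B * P := (hηj j h).2
          _ ≤ D * P := mul_le_mul_of_nonneg_right (le_max_right _ _) hPpos.le
    calc ‖σ j (γ * u)‖ = ‖σ j γ‖ * ‖σ j u‖ := by
          rw [map_mul, norm_mul]
      _ ≤ G * (D * P) := mul_le_mul (hγle j) huj (norm_nonneg _) hGpos.le
      _ = G * D * P := by ring
  -- lower bound for one embedding of γ * u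
  have hMl : g * A * P ≤ ‖σ j₁ (γ * u)‖ := by
    have h1 : A * P ≤ ‖σ j₁ u‖ := (hηj j₁ hj₁ge).1
    calc g * A * P = g * (A * P) := by ring
      _ ≤ g * ‖σ j₁ u‖ := mul_le_mul_of_nonneg_left h1 hg.le
      _ = ‖σ j₁ (γ * u)‖ := by rw [map_mul, norm_mul]
  constructor
  · have h1 : g * A * P ≤ C1 * (Finset.univ.sup' Finset.univ_nonempty
        fun k : Fin (d + 1) => |(b.repr (γ * u) k : ℝ)|) :=
      le_trans hMl (hMS (γ * u) j₁)
    rw [div_mul_eq_mul_div, div_le_iff₀ hC1pos]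
    calc g * A * P ≤ C1 * (Finset.univ.sup' Finset.univ_nonempty
          fun k : Fin (d + 1) => |(b.repr (γ * u) k : ℝ)|) := h1
      _ = (Finset.univ.sup' Finset.univ_nonempty
          fun k : Fin (d + 1) => |(b.repr (γ * u) k : ℝ)|) * C1 := mul_comm _ _
  · apply Finset.sup'_le
    intro k _
    calc |(b.repr (γ * u) k : ℝ)| ≤ C2 * (Finset.univ.sup' Finset.univ_nonempty
          fun j : Fin (d + 1) => ‖σ j (γ * u)‖) := hSM (γ * u) k
      _ ≤ C2 * (G * D * P) := by
          refine mul_le_mul_of_nonneg_left ?_ hC2pos.le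
          exact Finset.sup'_le _ _ fun j _ => hMu j
      _ = C2 * (G * D) * P := by ring
end

section
/- Let K be a real number field of degree d+1, with embeddings σ_0 = Id, σ_1, ..., σ_d into C, unit rank r, and multiplicatively independent units ε_1, ..., ε_r. Then there exists a sequence (η_m)_{m≥1} of positive units in the ring of integers O of K such that η_m ≍ e^{−dm} and |σ_j(η_m)| ≍ e^m for all 1 ≤ j ≤ d, with implicit constants depending only on K. -/
open NumberField

open NumberField NumberField.Units NumberField.InfinitePlace
open NumberField.Units.dirichletUnitTheorem

theorem stmt12_aux {K : Type*} [Field K] [NumberField K] (g : InfinitePlace K → ℝ)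
    (hsum : ∑ w : InfinitePlace K, (mult w : ℝ) * g w = 0) :
    ∃ C : ℝ, 0 ≤ C ∧ ∃ η : ℕ → (𝓞 K)ˣ, ∀ m : ℕ, ∀ w : InfinitePlace K,
      |Real.log (w (((η m : 𝓞 K)) : K)) - (m : ℝ) * g w| ≤ C := by
  classical
  set v : {w : InfinitePlace K // w ≠ w₀} → ℝ := fun w => (mult w.1 : ℝ) * g w.1 with hv
  have hsub : ∑ w : {w : InfinitePlace K // w ≠ w₀}, v w
      = -((mult (w₀ : InfinitePlace K) : ℝ) * g w₀) := by
    have h1 : ∑ w : {w : InfinitePlace K // w ≠ w₀}, v w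
        = ∑ w ∈ Finset.univ.erase (w₀ : InfinitePlace K), (mult w : ℝ) * g w := by
      refine (Finset.sum_subtype _ (fun w => ?_) (fun w => (mult w : ℝ) * g w)).symm
      simp [Finset.mem_erase]
    have h2 := Finset.add_sum_erase Finset.univ (fun w => (mult w : ℝ) * g w)
      (Finset.mem_univ (w₀ : InfinitePlace K))
    rw [hsum] at h2
    rw [h1]; linarith
  have hvmem : v ∈ Submodule.span ℝ
      ((unitLattice K : Set ({w : InfinitePlace K // w ≠ w₀} → ℝ))) := by
    rw [unitLattice_span_eq_top]; exact Submodule.mem_top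
  obtain ⟨n, f, xs, hxs⟩ := Submodule.mem_span_set'.mp hvmem
  have hex : ∀ i, ∃ u : (𝓞 K)ˣ, logEmbedding K (Additive.ofMul u) = (xs i : _) := by
    intro i
    obtain ⟨y, -, hy⟩ := (xs i).2
    exact ⟨y.toMul, hy⟩
  choose u hu using hex
  set η : ℕ → (𝓞 K)ˣ := fun m => ∏ i, (u i) ^ ⌊(m : ℝ) * f i⌋ with hη
  set C : ℝ := ∑ i, ‖(xs i : {w : InfinitePlace K // w ≠ w₀} → ℝ)‖ with hC
  have hC0 : 0 ≤ C := Finset.sum_nonneg fun i _ => norm_nonneg _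
  set N : ℝ := (Fintype.card {w : InfinitePlace K // w ≠ w₀} : ℝ) with hN
  have hN0 : 0 ≤ N := Nat.cast_nonneg _
  refine ⟨(N + 1) * C, by positivity, η, fun m w => ?_⟩
  have hlog : logEmbedding K (Additive.ofMul (η m))
      = ∑ i, (⌊(m : ℝ) * f i⌋ : ℝ) • (xs i : {w : InfinitePlace K // w ≠ w₀} → ℝ) := by
    have gen : ∀ s : Finset (Fin n),
        logEmbedding K (Additive.ofMul (∏ i ∈ s, u i ^ ⌊(m : ℝ) * f i⌋))
        = ∑ i ∈ s, (⌊(m : ℝ) * f i⌋ : ℝ) • (xs i : {w : InfinitePlace K // w ≠ w₀} → ℝ) := by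
      intro s
      induction s using Finset.induction with
      | empty => simpa using map_zero (logEmbedding K)
      | insert a s' hi ih =>
        rw [Finset.prod_insert hi, Finset.sum_insert hi, ← ih]
        have h1 : Additive.ofMul (u a ^ ⌊(m : ℝ) * f a⌋ * ∏ i ∈ s', u i ^ ⌊(m : ℝ) * f i⌋)
            = Additive.ofMul (u a ^ ⌊(m : ℝ) * f a⌋)
              + Additive.ofMul (∏ i ∈ s', u i ^ ⌊(m : ℝ) * f i⌋) := rfl
        rw [h1, map_add]
        congr 1
        have h2 : Additive.ofMul (u a ^ ⌊(m : ℝ) * f a⌋)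
            = ⌊(m : ℝ) * f a⌋ • Additive.ofMul (u a) := by
          simp [ofMul_zpow]
        rw [h2, map_zsmul, hu a, ← Int.cast_smul_eq_zsmul ℝ]
    exact gen Finset.univ
  have hbound : ∀ w' : {w : InfinitePlace K // w ≠ w₀},
      |logEmbedding K (Additive.ofMul (η m)) w' - (m : ℝ) * v w'| ≤ C := by
    intro w'
    have h1 : logEmbedding K (Additive.ofMul (η m)) w' - (m : ℝ) * v w'
        = ∑ i, ((⌊(m : ℝ) * f i⌋ : ℝ) - (m : ℝ) * f i)
            * (xs i : {w : InfinitePlace K // w ≠ w₀} → ℝ) w' := by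
      have h2 := congrFun hxs w'
      simp only [Finset.sum_apply, Pi.smul_apply, smul_eq_mul] at h2
      rw [hlog]
      simp only [Finset.sum_apply, Pi.smul_apply, smul_eq_mul]
      rw [← h2, Finset.mul_sum, ← Finset.sum_sub_distrib]
      exact Finset.sum_congr rfl fun i _ => by ring
    rw [h1]
    calc |∑ i, ((⌊(m : ℝ) * f i⌋ : ℝ) - (m : ℝ) * f i)
            * (xs i : {w : InfinitePlace K // w ≠ w₀} → ℝ) w'|
        ≤ ∑ i, |((⌊(m : ℝ) * f i⌋ : ℝ) - (m : ℝ) * f i)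
            * (xs i : {w : InfinitePlace K // w ≠ w₀} → ℝ) w'| :=
          Finset.abs_sum_le_sum_abs _ _
      _ ≤ C := by
          rw [hC]
          refine Finset.sum_le_sum fun i _ => ?_
          rw [abs_mul]
          have h3 : |(⌊(m : ℝ) * f i⌋ : ℝ) - (m : ℝ) * f i| ≤ 1 := by
            rw [abs_le]
            constructor
            · linarith [Int.lt_floor_add_one ((m : ℝ) * f i)]
            · linarith [Int.floor_le ((m : ℝ) * f i)]
          have h4 : |(xs i : {w : InfinitePlace K // w ≠ w₀} → ℝ) w'|
              ≤ ‖(xs i : {w : InfinitePlace K // w ≠ w₀} → ℝ)‖ := by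
            simpa using norm_le_pi_norm ((xs i : {w : InfinitePlace K // w ≠ w₀} → ℝ)) w'
          calc |(⌊(m : ℝ) * f i⌋ : ℝ) - (m : ℝ) * f i|
                * |(xs i : {w : InfinitePlace K // w ≠ w₀} → ℝ) w'|
              ≤ 1 * ‖(xs i : {w : InfinitePlace K // w ≠ w₀} → ℝ)‖ :=
                mul_le_mul h3 h4 (abs_nonneg _) one_pos.le
            _ = _ := one_mul _
  have hmult1 : ∀ w : InfinitePlace K, (1 : ℝ) ≤ (mult w : ℝ) := fun w => one_le_mult
  by_cases hw : w = w₀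
  · subst hw
    have h1 := sum_logEmbedding_component (η m)
    have h2 : (mult (w₀ : InfinitePlace K) : ℝ)
        * (Real.log (w₀ (((η m : 𝓞 K)) : K)) - (m : ℝ) * g w₀)
        = -∑ w' : {w : InfinitePlace K // w ≠ w₀},
            (logEmbedding K (Additive.ofMul (η m)) w' - (m : ℝ) * v w') := by
      rw [Finset.sum_sub_distrib, h1, ← Finset.mul_sum, hsub]
      ring
    have h3 : |(mult (w₀ : InfinitePlace K) : ℝ)
        * (Real.log (w₀ (((η m : 𝓞 K)) : K)) - (m : ℝ) * g w₀)| ≤ N * C := by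
      rw [h2, abs_neg]
      calc |∑ w' : {w : InfinitePlace K // w ≠ w₀},
              (logEmbedding K (Additive.ofMul (η m)) w' - (m : ℝ) * v w')|
          ≤ ∑ w' : {w : InfinitePlace K // w ≠ w₀},
              |logEmbedding K (Additive.ofMul (η m)) w' - (m : ℝ) * v w'| :=
            Finset.abs_sum_le_sum_abs _ _
        _ ≤ ∑ _w' : {w : InfinitePlace K // w ≠ w₀}, C :=
            Finset.sum_le_sum fun w' _ => hbound w'
        _ = N * C := by rw [Finset.sum_const, Finset.card_univ, nsmul_eq_mul, hN]
    rw [abs_mul, Nat.abs_cast] at h3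
    have h4 := mul_le_mul_of_nonneg_right (hmult1 (w₀ : InfinitePlace K))
      (abs_nonneg (Real.log (w₀ (((η m : 𝓞 K)) : K)) - (m : ℝ) * g w₀))
    rw [one_mul] at h4
    have h5 : (N + 1) * C = N * C + C := by ring
    linarith
  · have h1 := hbound ⟨w, hw⟩
    rw [logEmbedding_component] at h1
    have h2 : (mult w : ℝ) * Real.log (w (((η m : 𝓞 K)) : K))
        - (m : ℝ) * v ⟨w, hw⟩
        = (mult w : ℝ) * (Real.log (w (((η m : 𝓞 K)) : K)) - (m : ℝ) * g w) := by
      rw [hv]; ring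
    rw [h2, abs_mul, Nat.abs_cast] at h1
    have h4 := mul_le_mul_of_nonneg_right (hmult1 w)
      (abs_nonneg (Real.log (w (((η m : 𝓞 K)) : K)) - (m : ℝ) * g w))
    rw [one_mul] at h4
    have h5 : (N + 1) * C = N * C + C := by ring
    have h6 : 0 ≤ N * C := mul_nonneg hN0 hC0
    linarith

/-- `K` a real number field of degree `d+1` with embeddings
`σ_0 = Id, σ_1, …, σ_d` into `ℂ`, `σ_0` real.  There is a sequence `(η_m)_{m≥1}`
of positive units of `𝓞 K` with `η_m ≍ e^{−dm}` and `|σ_j(η_m)| ≍ e^m` for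
`1 ≤ j ≤ d`, the implicit constants depending only on `K`. -/
theorem stmt12 {K : Type*} [Field K] [NumberField K]
    (d : ℕ) (hd : 1 ≤ d) (hdim : Module.finrank ℚ K = d + 1)
    (σ : Fin (d + 1) → (K →+* ℂ)) (hσ : Function.Injective σ)
    (hreal : ∀ x : K, (σ 0 x).im = 0) :
    ∃ c₁ c₂ c₃ c₄ : ℝ, 0 < c₁ ∧ 0 < c₂ ∧ 0 < c₃ ∧ 0 < c₄ ∧
      ∃ η : ℕ → (RingOfIntegers K)ˣ, ∀ m : ℕ, 1 ≤ m →
        0 < (σ 0 (((η m : RingOfIntegers K)) : K)).re ∧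
        c₁ * Real.exp (-(d * m : ℝ))
            ≤ ‖σ 0 (((η m : RingOfIntegers K)) : K)‖ ∧
        ‖σ 0 (((η m : RingOfIntegers K)) : K)‖
            ≤ c₂ * Real.exp (-(d * m : ℝ)) ∧
        ∀ j : Fin (d + 1), 1 ≤ (j : ℕ) →
          c₃ * Real.exp (m : ℝ)
              ≤ ‖σ j (((η m : RingOfIntegers K)) : K)‖ ∧
          ‖σ j (((η m : RingOfIntegers K)) : K)‖
              ≤ c₄ * Real.exp (m : ℝ) := by
    classical
  -- σ 0 is a real embedding
  have hconj : ComplexEmbedding.conjugate (σ 0) = σ 0 := by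
    ext x
    exact Complex.conj_eq_iff_im.mpr (hreal x)
  set w0' : InfinitePlace K := InfinitePlace.mk (σ 0) with hw0'
  have hreal0 : IsReal w0' :=
    isReal_mk_iff.mpr (ComplexEmbedding.isReal_iff.mpr hconj)
  have hmult0 : mult w0' = 1 := by rw [mult, if_pos hreal0]
  have hmkne : ∀ j : Fin (d + 1), 1 ≤ (j : ℕ) → InfinitePlace.mk (σ j) ≠ w0' := by
    intro j hj h
    have hj0 : j ≠ 0 := by
      intro h0; rw [h0] at hj; simp at hj
    rcases mk_eq_iff.mp h with h' | h'
    · exact hj0 (hσ h')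
    · have : σ j = ComplexEmbedding.conjugate (σ 0) := by
        have := congrArg ComplexEmbedding.conjugate h'
        rwa [ComplexEmbedding.conjugate, star_star] at this
      rw [hconj] at this
      exact hj0 (hσ this)
  set g : InfinitePlace K → ℝ := fun w => if w = w0' then -(d : ℝ) else 1 with hg
  have hsumg : ∑ w : InfinitePlace K, (mult w : ℝ) * g w = 0 := by
    have key : ∀ w : InfinitePlace K, (mult w : ℝ) * g w
        = (mult w : ℝ) + (if w = w0' then (-(d : ℝ) - 1) * (mult w : ℝ) else 0) := by
      intro w
      rcases eq_or_ne w w0' with h | h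
      · subst h; rw [hmult0]; simp only [hg, if_pos rfl]; push_cast; ring
      · simp [hg, h]
    rw [Finset.sum_congr rfl fun w _ => key w, Finset.sum_add_distrib,
      Finset.sum_ite_eq' Finset.univ w0' (fun w => (-(d : ℝ) - 1) * (mult w : ℝ))]
    have hsm : ∑ w : InfinitePlace K, (mult w : ℝ) = (d : ℝ) + 1 := by
      rw [← Nat.cast_sum, sum_mult_eq, hdim]
      push_cast; ring
    rw [hsm]
    simp [hmult0]
  obtain ⟨C, hC0, η', hη'⟩ := stmt12_aux g hsumg
  refine ⟨Real.exp (-C), Real.exp C, Real.exp (-C), Real.exp C,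
    Real.exp_pos _, Real.exp_pos _, Real.exp_pos _, Real.exp_pos _, ?_⟩
  set η : ℕ → (𝓞 K)ˣ :=
    fun m => if 0 < (σ 0 (((η' m : 𝓞 K)) : K)).re then η' m else -(η' m) with hηdef
  have hnz : ∀ m : ℕ, (((η' m : 𝓞 K)) : K) ≠ 0 := by
    intro m
    simp [RingOfIntegers.coe_eq_zero_iff]
  have hval : ∀ m : ℕ, (((η m : 𝓞 K)) : K) = (((η' m : 𝓞 K)) : K)
      ∨ (((η m : 𝓞 K)) : K) = -(((η' m : 𝓞 K)) : K) := by
    intro m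
    by_cases h : 0 < (σ 0 (((η' m : 𝓞 K)) : K)).re
    · left; rw [hηdef]; simp [h]
    · right; rw [hηdef]; simp [h]
  have habs : ∀ m : ℕ, ∀ j : Fin (d + 1),
      ‖σ j (((η m : 𝓞 K)) : K)‖
        = ‖σ j (((η' m : 𝓞 K)) : K)‖ := by
    intro m j
    rcases hval m with h | h
    · rw [h]
    · rw [h, map_neg, norm_neg]
  refine ⟨η, fun m _ => ?_⟩
  -- bounds via places
  have hb : ∀ j : Fin (d + 1),
      Real.exp ((m : ℝ) * g (InfinitePlace.mk (σ j)) - C)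
          ≤ ‖σ j (((η' m : 𝓞 K)) : K)‖ ∧
      ‖σ j (((η' m : 𝓞 K)) : K)‖
          ≤ Real.exp ((m : ℝ) * g (InfinitePlace.mk (σ j)) + C) := by
    intro j
    have hpw : 0 < (InfinitePlace.mk (σ j)) (((η' m : 𝓞 K)) : K) :=
      pos_iff.mpr (hnz m)
    have h := hη' m (InfinitePlace.mk (σ j))
    rw [abs_le] at h
    have happ : (InfinitePlace.mk (σ j)) (((η' m : 𝓞 K)) : K)
        = ‖σ j (((η' m : 𝓞 K)) : K)‖ := rfl
    constructor
    · rw [← happ, ← Real.exp_log hpw]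
      exact Real.exp_le_exp.mpr (by linarith [h.1])
    · rw [← happ, ← Real.exp_log hpw]
      exact Real.exp_le_exp.mpr (by linarith [h.2])
  -- positivity
  have hpos : 0 < (σ 0 (((η m : 𝓞 K)) : K)).re := by
    by_cases h : 0 < (σ 0 (((η' m : 𝓞 K)) : K)).re
    · have : η m = η' m := by rw [hηdef]; simp [h]
      rw [this]; exact h
    · have hne : σ 0 (((η' m : 𝓞 K)) : K) ≠ 0 := by
        intro h0
        exact hnz m ((map_eq_zero_iff (σ 0) (σ 0).injective).mp h0)
      have hre : (σ 0 (((η' m : 𝓞 K)) : K)).re ≠ 0 := by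
        intro h0
        exact hne (Complex.ext h0 (hreal _))
      have hm : η m = -(η' m) := by rw [hηdef]; simp [h]
      have hcoe : (((η m : 𝓞 K)) : K) = -(((η' m : 𝓞 K)) : K) := by
        rw [hm]; push_cast; ring
      rw [hcoe, map_neg, Complex.neg_re]
      have : (σ 0 (((η' m : 𝓞 K)) : K)).re < 0 :=
        lt_of_le_of_ne (not_lt.mp h) hre
      linarith
  refine ⟨hpos, ?_, ?_, ?_⟩
  · -- lower bound at σ 0
    rw [habs m 0]
    have h := (hb 0).1
    have hgw : g (InfinitePlace.mk (σ 0)) = -(d : ℝ) := by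
      rw [hg]; simp [hw0']
    have heq : Real.exp (-C) * Real.exp (-(d * m : ℝ))
        = Real.exp ((m : ℝ) * g (InfinitePlace.mk (σ 0)) - C) := by
      rw [← Real.exp_add, hgw]; congr 1; ring
    rw [heq]; exact h
  · rw [habs m 0]
    have h := (hb 0).2
    have hgw : g (InfinitePlace.mk (σ 0)) = -(d : ℝ) := by
      rw [hg]; simp [hw0']
    have heq : Real.exp C * Real.exp (-(d * m : ℝ))
        = Real.exp ((m : ℝ) * g (InfinitePlace.mk (σ 0)) + C) := by
      rw [← Real.exp_add, hgw]; congr 1; ring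
    rw [heq]; exact h
  · intro j hj
    have hgw : g (InfinitePlace.mk (σ j)) = 1 := by
      rw [hg]; simp [hmkne j hj]
    constructor
    · rw [habs m j]
      have h := (hb j).1
      have heq : Real.exp (-C) * Real.exp (m : ℝ)
          = Real.exp ((m : ℝ) * g (InfinitePlace.mk (σ j)) - C) := by
        rw [← Real.exp_add, hgw]; congr 1; ring
      rw [heq]; exact h
    · rw [habs m j]
      have h := (hb j).2
      have heq : Real.exp C * Real.exp (m : ℝ)
          = Real.exp ((m : ℝ) * g (InfinitePlace.mk (σ j)) + C) := by
        rw [← Real.exp_add, hgw]; congr 1; ring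
      rw [heq]; exact h
end

section
/- Let α be a real algebraic number of degree d+1, K = Q(α), and let (η_m)_{m≥1} be a sequence of positive units in the ring of integers O of K satisfying η_m ≍ e^{−dm} and |σ_j(η_m)| ≍ e^m for 1 ≤ j ≤ d, where σ_0 = Id, σ_1, ..., σ_d are the embeddings of K into C. Let λ' > 0. Then there exists a finite set Γ = Γ(λ') of nonzero elements of K such that every integer polynomial P(X) of degree at most d with P(α) ≠ 0 and |P(α)| ≤ λ'·H(P)^{−d} satisfies P(α) = γ·η_m for some γ ∈ Γ and some positive integer m. -/
open NumberField

/-- Naive height of an integer polynomial: max of absolute values of coefficients. -/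
def intPolyHeight (P : Polynomial ℤ) : ℕ :=
  P.support.sup fun k => (P.coeff k).natAbs

lemma coeff_abs_le_height (P : Polynomial ℤ) (i : ℕ) :
    (|P.coeff i| : ℝ) ≤ intPolyHeight P := by
  by_cases h : i ∈ P.support
  · have h1 : (P.coeff i).natAbs ≤ intPolyHeight P :=
      Finset.le_sup (f := fun k => (P.coeff k).natAbs) h
    rw [← Int.cast_abs, Int.abs_eq_natAbs]
    exact_mod_cast h1
  · simp [Polynomial.notMem_support_iff.1 h]

lemma one_le_height {P : Polynomial ℤ} (hP : P ≠ 0) : 1 ≤ intPolyHeight P := by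
  have h : P.natDegree ∈ P.support := Polynomial.natDegree_mem_support_of_nonzero hP
  have h2 : 1 ≤ (P.coeff P.natDegree).natAbs := by
    have := Polynomial.mem_support_iff.1 h
    omega
  exact le_trans h2 (Finset.le_sup (f := fun k => (P.coeff k).natAbs) h)

lemma aeval_abs_le (d : ℕ) (P : Polynomial ℤ) (hP : P.natDegree ≤ d) (z : ℂ) :
    ‖Polynomial.aeval z P‖
      ≤ (d+1) * (intPolyHeight P) * (max 1 (‖z‖))^d := by
  have hM1 : (1:ℝ) ≤ max 1 (‖z‖) := le_max_left _ _
  rw [Polynomial.aeval_eq_sum_range' (Nat.lt_succ_of_le hP)]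
  calc ‖∑ i ∈ Finset.range (d+1), P.coeff i • z ^ i‖
      ≤ ∑ i ∈ Finset.range (d+1), ‖P.coeff i • z ^ i‖ :=
        norm_sum_le _ _
    _ ≤ ∑ _i ∈ Finset.range (d+1),
          (intPolyHeight P : ℝ) * (max 1 (‖z‖))^d := by
        apply Finset.sum_le_sum
        intro i hi
        rw [zsmul_eq_mul, norm_mul]
        have h1 : ‖((P.coeff i : ℤ) : ℂ)‖ ≤ intPolyHeight P := by
          rw [Complex.norm_intCast]
          exact_mod_cast coeff_abs_le_height P i
        have h2 : ‖z ^ i‖ ≤ (max 1 (‖z‖))^d := by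
          rw [norm_pow]
          calc ‖z‖ ^ i ≤ (max 1 (‖z‖)) ^ i :=
                pow_le_pow_left₀ (norm_nonneg z) (le_max_right _ _) i
            _ ≤ _ := pow_le_pow_right₀ hM1 (Nat.le_of_lt_succ (Finset.mem_range.1 hi))
        exact mul_le_mul h1 h2 (norm_nonneg _) (Nat.cast_nonneg _)
    _ = (d+1) * intPolyHeight P * (max 1 (‖z‖))^d := by
        rw [Finset.sum_const, Finset.card_range]
        push_cast
        ring

lemma intCast_mul_mem_integralClosure {K : Type*} [Field K] {x : K} {y z : ℤ}
    (h : (y : K) * x ∈ integralClosure ℤ K) (hdvd : y ∣ z) :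
    (z : K) * x ∈ integralClosure ℤ K := by
  obtain ⟨c, rfl⟩ := hdvd
  have : ((y * c : ℤ) : K) * x = (c : K) * ((y : K) * x) := by push_cast; ring
  rw [this]
  have hc : (c : K) ∈ integralClosure ℤ K := by
    have := Subalgebra.algebraMap_mem (integralClosure ℤ K) c
    simpa using this
  exact mul_mem hc h

/-- Let `α` generate the real number field `K = ℚ(α)` of degree
`d+1`, with embeddings `σ_0 = Id, σ_1, …, σ_d` (`σ_0` real), and let
`(η_m)_{m≥1}` be a sequence of positive units with `η_m ≍ e^{−dm}` and
`|σ_j(η_m)| ≍ e^m` for `1 ≤ j ≤ d`.  For every `λ' > 0` there is a finite set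
`Γ` of nonzero elements of `K` such that every integer polynomial `P` of degree
at most `d` with `P(α) ≠ 0` and `|P(α)| ≤ λ'·H(P)^{−d}` satisfies
`P(α) = γ·η_m` for some `γ ∈ Γ` and some `m ≥ 1`. -/
theorem stmt13 {K : Type*} [Field K] [NumberField K]
    (d : ℕ) (hd : 1 ≤ d) (hdim : Module.finrank ℚ K = d + 1)
    (α : K) (hα : (minpoly ℚ α).natDegree = d + 1)
    (σ : Fin (d + 1) → (K →+* ℂ)) (hσ : Function.Injective σ)
    (hreal : ∀ x : K, (σ 0 x).im = 0)
    (η : ℕ → (RingOfIntegers K)ˣ)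
    (c₁ c₂ c₃ c₄ : ℝ) (hc₁ : 0 < c₁) (hc₂ : 0 < c₂) (hc₃ : 0 < c₃) (hc₄ : 0 < c₄)
    (hη : ∀ m : ℕ, 1 ≤ m →
      0 < (σ 0 (((η m : RingOfIntegers K)) : K)).re ∧
      c₁ * Real.exp (-(d * m : ℝ))
          ≤ ‖σ 0 (((η m : RingOfIntegers K)) : K)‖ ∧
      ‖σ 0 (((η m : RingOfIntegers K)) : K)‖
          ≤ c₂ * Real.exp (-(d * m : ℝ)) ∧
      ∀ j : Fin (d + 1), 1 ≤ (j : ℕ) →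
        c₃ * Real.exp (m : ℝ)
            ≤ ‖σ j (((η m : RingOfIntegers K)) : K)‖ ∧
        ‖σ j (((η m : RingOfIntegers K)) : K)‖
            ≤ c₄ * Real.exp (m : ℝ))
    (lam : ℝ) (hlam : 0 < lam) :
    ∃ Γ : Finset K, (∀ γ ∈ Γ, γ ≠ 0) ∧
      ∀ P : Polynomial ℤ, P.natDegree ≤ d → Polynomial.aeval α P ≠ 0 →
        ‖σ 0 (Polynomial.aeval α P)‖
            ≤ lam * (intPolyHeight P : ℝ) ^ (-(d : ℤ)) →
        ∃ γ ∈ Γ, ∃ m : ℕ, 1 ≤ m ∧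
          Polynomial.aeval α P = γ * ((η m : RingOfIntegers K) : K) := by
  classical
  -- σ is surjective onto the embeddings
  have hcard : Fintype.card (K →+* ℂ) = d + 1 := by
    rw [NumberField.Embeddings.card K ℂ, hdim]
  have hbij : Function.Bijective σ :=
    (Fintype.bijective_iff_injective_and_card σ).2 ⟨hσ, by simp [hcard]⟩
  -- common denominator D
  have halg : ∀ k : ℕ, IsAlgebraic ℤ (α ^ k) := fun k =>
    (IsFractionRing.isAlgebraic_iff ℤ ℚ K).mpr (Algebra.IsAlgebraic.isAlgebraic _)
  have hden : ∀ k : ℕ, ∃ y : ℤ, y ≠ 0 ∧ (y : K) * α ^ k ∈ integralClosure ℤ K := by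
    intro k
    obtain ⟨y, hy, hint⟩ := (halg k).exists_integral_multiple
    refine ⟨y, hy, ?_⟩
    rw [mem_integralClosure_iff, ← zsmul_eq_mul]
    exact hint
  choose y hy0 hyint using hden
  set D : ℤ := ∏ k ∈ Finset.range (d + 1), |y k| with hD
  have hD0 : 0 < D := Finset.prod_pos fun k _ => abs_pos.2 (hy0 k)
  have hDint : ∀ k ≤ d, (D : K) * α ^ k ∈ integralClosure ℤ K := by
    intro k hk
    refine intCast_mul_mem_integralClosure (hyint k) ?_
    exact dvd_trans ((dvd_abs _ _).2 dvd_rfl)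
      (Finset.dvd_prod_of_mem _ (Finset.mem_range.2 (Nat.lt_succ_of_le hk)))
  -- the uniform bound M on conjugates of α
  set M : ℝ := (Finset.univ : Finset (Fin (d+1))).sup' ⟨0, Finset.mem_univ 0⟩
      (fun j => max 1 (‖σ j α‖)) with hM
  have hMj : ∀ j, max 1 (‖σ j α‖) ≤ M := by
    intro j
    rw [hM]
    exact Finset.le_sup' (fun j => max 1 (‖σ j α‖)) (Finset.mem_univ j)
  have hM1 : (1:ℝ) ≤ M := le_trans (le_max_left 1 (‖σ 0 α‖)) (hMj 0)
  -- the bound B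
  set B : ℝ := max (lam / c₁ * Real.exp 1 ^ d) ((d+1) * M^d / c₃) with hB
  have hBpos : 0 < B := lt_of_lt_of_le (by positivity) (le_max_left _ _)
  -- the finite set
  have hTfin := NumberField.Embeddings.finite_of_norm_le K ℂ ((D : ℝ) * B)
  refine ⟨(hTfin.toFinset.image fun x => x / (D : K)).erase 0,
    fun γ hγ => Finset.ne_of_mem_erase hγ, ?_⟩
  intro P hdeg hne hbound
  -- basic facts about P
  have hPne : P ≠ 0 := fun h => hne (by simp [h])
  have hH1 : 1 ≤ intPolyHeight P := one_le_height hPne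
  set H : ℝ := (intPolyHeight P : ℝ) with hHdef
  have hH1' : (1:ℝ) ≤ H := by rw [hHdef]; exact_mod_cast hH1
  have hHpos : (0:ℝ) < H := lt_of_lt_of_le one_pos hH1'
  -- choice of m
  set m : ℕ := ⌊Real.log H⌋₊ + 1 with hm
  have hm1 : 1 ≤ m := Nat.le_add_left 1 _
  have hlog0 : 0 ≤ Real.log H := Real.log_nonneg hH1'
  have hexp2 : H ≤ Real.exp m := by
    have h1 : Real.log H < m := by
      have := Nat.lt_floor_add_one (Real.log H)
      rw [hm]
      push_cast
      linarith
    have := Real.exp_lt_exp.2 h1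
    rw [Real.exp_log hHpos] at this
    linarith
  have hexp1 : Real.exp m ≤ Real.exp 1 * H := by
    have h1 : (m : ℝ) ≤ Real.log H + 1 := by
      have := Nat.floor_le hlog0
      rw [hm]
      push_cast
      linarith
    have := Real.exp_le_exp.2 h1
    rwa [Real.exp_add, Real.exp_log hHpos, mul_comm] at this
  have hexppos : (0:ℝ) < Real.exp m := Real.exp_pos _
  -- the unit
  obtain ⟨-, hηlow, -, hηj⟩ := hη m hm1
  set u : K := ((η m : RingOfIntegers K) : K) with hu
  have hE0pos : 0 < ‖σ 0 u‖ :=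
    lt_of_lt_of_le (by positivity) hηlow
  have hu0 : u ≠ 0 := by
    intro h
    rw [h] at hE0pos
    simp at hE0pos
  set γ : K := Polynomial.aeval α P * u⁻¹ with hγdef
  have hγ0 : γ ≠ 0 := mul_ne_zero hne (inv_ne_zero hu0)
  -- conjugate bounds on γ
  have habsγ : ∀ j : Fin (d+1),
      ‖σ j γ‖ = ‖σ j (Polynomial.aeval α P)‖ / ‖σ j u‖ := by
    intro j
    rw [hγdef, map_mul, norm_mul, map_inv₀, norm_inv, div_eq_mul_inv]
  have hbound' : ‖σ 0 (Polynomial.aeval α P)‖ ≤ lam * (H ^ d)⁻¹ := by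
    rw [show ((intPolyHeight P : ℝ) ^ (-(d:ℤ))) = (H ^ d)⁻¹ by
      rw [zpow_neg, zpow_natCast]] at hbound
    exact hbound
  have hexpneg : c₁ * (Real.exp (m:ℝ) ^ d)⁻¹ ≤ ‖σ 0 u‖ := by
    have : Real.exp (-(d * m : ℝ)) = (Real.exp (m:ℝ) ^ d)⁻¹ := by
      rw [Real.exp_neg, Real.exp_nat_mul]
    rw [← this]
    exact hηlow
  have hγ0bound : ‖σ 0 γ‖ ≤ lam / c₁ * Real.exp 1 ^ d := by
    rw [habsγ 0]
    calc ‖σ 0 (Polynomial.aeval α P)‖ / ‖σ 0 u‖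
        ≤ (lam * (H ^ d)⁻¹) / (c₁ * (Real.exp (m:ℝ) ^ d)⁻¹) :=
          div_le_div₀ (by positivity) hbound' (by positivity) hexpneg
      _ = (lam / c₁) * (Real.exp (m:ℝ) / H) ^ d := by
          rw [div_pow]
          field_simp
      _ ≤ (lam / c₁) * Real.exp 1 ^ d := by
          refine mul_le_mul_of_nonneg_left ?_ (by positivity)
          refine pow_le_pow_left₀ (by positivity) ?_ d
          rw [div_le_iff₀ hHpos]
          linarith
  have hγjbound : ∀ j : Fin (d+1), 1 ≤ (j:ℕ) →
      ‖σ j γ‖ ≤ (d+1) * M^d / c₃ := by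
    intro j hj
    rw [habsγ j]
    have hAj : ‖σ j (Polynomial.aeval α P)‖ ≤ (d+1) * H * M^d := by
      have heq : σ j (Polynomial.aeval α P) = Polynomial.aeval (σ j α) P :=
        (Polynomial.aeval_algHom_apply (σ j).toIntAlgHom α P).symm
      rw [heq]
      calc ‖Polynomial.aeval (σ j α) P‖
          ≤ (d+1) * (intPolyHeight P) * (max 1 (‖σ j α‖))^d :=
            aeval_abs_le d P hdeg (σ j α)
        _ ≤ (d+1) * H * M^d :=
            mul_le_mul_of_nonneg_left
              (pow_le_pow_left₀ (le_trans zero_le_one (le_max_left _ _)) (hMj j) d)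
              (by positivity)
    have hEj : c₃ * Real.exp (m:ℝ) ≤ ‖σ j u‖ := (hηj j hj).1
    calc ‖σ j (Polynomial.aeval α P)‖ / ‖σ j u‖
        ≤ ((d+1) * H * M^d) / (c₃ * Real.exp (m:ℝ)) :=
          div_le_div₀ (by positivity) hAj (by positivity) hEj
      _ ≤ ((d+1) * Real.exp (m:ℝ) * M^d) / (c₃ * Real.exp (m:ℝ)) := by gcongr
      _ = (d+1) * M^d / c₃ := by
          field_simp
  have hγB : ∀ φ : K →+* ℂ, ‖φ ((D:K) * γ)‖ ≤ (D:ℝ) * B := by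
    intro φ
    obtain ⟨j, rfl⟩ := hbij.2 φ
    rw [map_mul, norm_mul, map_intCast, Complex.norm_intCast]
    rw [abs_of_pos (by exact_mod_cast hD0 : (0:ℝ) < (D:ℝ))]
    apply mul_le_mul_of_nonneg_left _ (by exact_mod_cast hD0.le)
    by_cases hj : (j:ℕ) = 0
    · have : j = 0 := Fin.ext hj
      rw [this]
      exact le_trans hγ0bound (le_max_left _ _)
    · exact le_trans (hγjbound j (by omega)) (le_max_right _ _)
  -- Dγ is an algebraic integer
  have hint : IsIntegral ℤ ((D:K) * γ) := by
    have huv : u⁻¹ = ((((η m)⁻¹ : (RingOfIntegers K)ˣ) : RingOfIntegers K) : K) := by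
      have h0 : ((η m : RingOfIntegers K) * (((η m)⁻¹ : (RingOfIntegers K)ˣ) : RingOfIntegers K)) = 1 :=
        Units.mul_inv (η m)
      have h1 : u * ((((η m)⁻¹ : (RingOfIntegers K)ˣ) : RingOfIntegers K) : K) = 1 := by
        rw [hu, RingOfIntegers.coe_eq_algebraMap, RingOfIntegers.coe_eq_algebraMap,
          ← map_mul, h0, map_one]
      exact inv_eq_of_mul_eq_one_right h1
    have h2 : (D:K) * γ = ((D:K) * Polynomial.aeval α P) *
        ((((η m)⁻¹ : (RingOfIntegers K)ˣ) : RingOfIntegers K) : K) := by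
      rw [hγdef, huv]; ring
    rw [h2]
    have h3 : (D:K) * Polynomial.aeval α P ∈ integralClosure ℤ K := by
      rw [Polynomial.aeval_eq_sum_range' (Nat.lt_succ_of_le hdeg), Finset.mul_sum]
      apply Subalgebra.sum_mem
      intro i hi
      have : (D:K) * (P.coeff i • α ^ i) = P.coeff i • ((D:K) * α ^ i) := by
        rw [zsmul_eq_mul, zsmul_eq_mul]; ring
      rw [this]
      exact Subalgebra.zsmul_mem _ (hDint i (Nat.le_of_lt_succ (Finset.mem_range.1 hi))) _
    have h4 : ((((η m)⁻¹ : (RingOfIntegers K)ˣ) : RingOfIntegers K) : K)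
        ∈ integralClosure ℤ K := by
      exact RingOfIntegers.isIntegral_coe _
    exact mul_mem h3 h4
  -- conclude membership in Γ
  have hmem : (D:K) * γ ∈ hTfin.toFinset := by
    rw [Set.Finite.mem_toFinset]
    exact ⟨hint, hγB⟩
  have hDK : (D:K) ≠ 0 := by
    exact_mod_cast hD0.ne'
  refine ⟨γ, ?_, m, hm1, ?_⟩
  · apply Finset.mem_erase.2
    refine ⟨hγ0, Finset.mem_image.2 ⟨(D:K) * γ, hmem, ?_⟩⟩
    rw [mul_comm, mul_div_assoc, div_self hDK, mul_one]
  · rw [hγdef, mul_assoc, inv_mul_cancel₀ hu0, mul_one]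
end
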